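/- Let L be a Lie algebra admitting a universal central extension 0 → Ĉ → L̂ → L → 0 with dim Ĉ = 1. Then every covering algebra of L is isomorphic either to L or to L̂. -/

import Mathlib

universe u

/-- Let `L` admit a universal central extension `0 → Ĉ → L̂ → L → 0` with `dim Ĉ = 1`.
Then every covering algebra of `L` is isomorphic either to `L` or to `L̂`. -/
theorem stmt6 (F : Type u) [Field F]
    (L Lhat : Type u) [LieRing L] [LieAlgebra F L] [LieRing Lhat] [LieAlgebra F Lhat]
    -- `q : L̂ → L` is a central extension
    (q : Lhat →ₗ⁅F⁆ L) (hqsurj : Function.Surjective q)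
    (hqcent : q.ker ≤ LieAlgebra.center F Lhat)
    -- ... which is universal
    (huniv : ∀ (E : Type u) [LieRing E] [LieAlgebra F E] (π : E →ₗ⁅F⁆ L),
      Function.Surjective π → π.ker ≤ LieAlgebra.center F E →
        ∃! ψ : Lhat →ₗ⁅F⁆ E, π.comp ψ = q)
    -- `Ĉ = ker q` is one-dimensional
    (hdim : Module.finrank F (q.ker : LieIdeal F Lhat) = 1) :
    ∀ (E : Type u) [LieRing E] [LieAlgebra F E] (π : E →ₗ⁅F⁆ L),
      Function.Surjective π → π.ker ≤ LieAlgebra.center F E →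
        ⁅(⊤ : LieIdeal F E), (⊤ : LieIdeal F E)⁆ = ⊤ →
          Nonempty (E ≃ₗ⁅F⁆ L) ∨ Nonempty (E ≃ₗ⁅F⁆ Lhat) := by
  intro E _ _ π hπsurj hπcent hperf
  obtain ⟨ψ, hψ, -⟩ := huniv E π hπsurj hπcent
  have hq : ∀ a : Lhat, π (ψ a) = q a := fun a => by rw [← hψ]; rfl
  -- every element of `E` is `ψ a` plus a central element
  have hdecomp : ∀ x : E, ∃ a : Lhat, x - ψ a ∈ LieAlgebra.center F E := by
    intro x
    obtain ⟨a, ha⟩ := hqsurj (π x)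
    refine ⟨a, hπcent ?_⟩
    simp [LieHom.mem_ker, hq, ha]
  -- a central element commutes with everything
  have hcentral : ∀ c : E, c ∈ LieAlgebra.center F E → ∀ y : E, ⁅y, c⁆ = 0 := by
    intro c hc y
    exact (LieModule.mem_maxTrivSubmodule F E E c).mp hc y
  -- the range of ψ is an ideal of E
  let I : LieIdeal F E :=
    { LinearMap.range (ψ : Lhat →ₗ[F] E) with
      lie_mem := by
        rintro x m hm
        obtain ⟨a, rfl⟩ : ∃ a, ψ a = m := hm
        obtain ⟨b, hb⟩ := hdecomp x
        refine ⟨⁅b, a⁆, ?_⟩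
        have h1 : ⁅x - ψ b, ψ a⁆ = 0 := by
          rw [← lie_skew, hcentral _ hb (ψ a), neg_zero]
        have h2 : ⁅x, ψ a⁆ = ⁅x - ψ b, ψ a⁆ + ⁅ψ b, ψ a⁆ := by
          rw [← add_lie]
          congr 1
          abel
        simp [LieHom.map_lie, h2, h1] }
  have hmemI : ∀ m : E, m ∈ I ↔ ∃ a, ψ a = m := fun m => Iff.rfl
  -- ψ is surjective since E is perfect
  have hItop : I = ⊤ := by
    rw [eq_top_iff, ← hperf, LieSubmodule.lieIdeal_oper_eq_span, LieSubmodule.lieSpan_le]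
    rintro z ⟨x, y, rfl⟩
    obtain ⟨b, hb⟩ := hdecomp (y : E)
    have hy : ((y : E) : E) = ψ b + ((y : E) - ψ b) := by abel
    have h0 : ⁅(x : E), (y : E) - ψ b⁆ = 0 := hcentral _ hb (x : E)
    have : ⁅(x : E), (y : E)⁆ = ⁅(x : E), ψ b⁆ := by
      rw [hy, lie_add, h0, add_zero]
    rw [SetLike.mem_coe, this]
    exact I.lie_mem ⟨b, rfl⟩
  have hψsurj : Function.Surjective ψ := by
    intro x
    have : x ∈ I := hItop ▸ LieSubmodule.mem_top x
    exact this
  -- ker ψ ≤ ker q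
  have hkerle : (ψ.ker : Submodule F Lhat) ≤ (q.ker : Submodule F Lhat) := by
    intro a ha
    have ha' : ψ a = 0 := ha
    have : q a = 0 := by rw [← hq, ha', map_zero]
    exact this
  -- ker q is one-dimensional hence simple
  haveI hsimple : IsSimpleOrder (Submodule F (q.ker : LieIdeal F Lhat)) :=
    is_simple_module_of_finrank_eq_one hdim
  set K : Submodule F Lhat := (q.ker : Submodule F Lhat) with hK
  set S : Submodule F (q.ker : LieIdeal F Lhat) :=
    Submodule.comap K.subtype (ψ.ker : Submodule F Lhat) with hS
  rcases hsimple.eq_bot_or_eq_top S with hbot | htop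
  · -- ker ψ = ⊥, so ψ is bijective and E ≃ L̂
    right
    have hinj : Function.Injective ψ := by
      rw [← LieHom.ker_eq_bot]
      rw [LieSubmodule.eq_bot_iff]
      intro a ha
      have haK : a ∈ K := hkerle ha
      have : (⟨a, haK⟩ : K) ∈ S := by
        simp only [hS, Submodule.mem_comap, Submodule.subtype_apply]
        exact ha
      rw [hbot] at this
      simpa using congrArg Subtype.val this
    exact ⟨(LieEquiv.ofBijective ψ ⟨hinj, hψsurj⟩).symm⟩
  · -- ker q ≤ ker ψ, so π is bijective and E ≃ L
    left
    have hKle : ∀ a : Lhat, a ∈ K → ψ a = 0 := by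
      intro a haK
      have : (⟨a, haK⟩ : K) ∈ S := by rw [htop]; trivial
      exact this
    have hπinj : Function.Injective π := by
      rw [← LieHom.ker_eq_bot, LieSubmodule.eq_bot_iff]
      intro x hx
      obtain ⟨a, rfl⟩ := hψsurj x
      have haq : a ∈ K := by
        have : q a = 0 := by rw [← hq]; exact hx
        exact this
      exact hKle a haq
    exact ⟨LieEquiv.ofBijective π ⟨hπinj, hπsurj⟩⟩
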